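/- Let S be a semigroup with finite R-height, and let B be a bi-ideal of S in which every element has a local right identity in B. Then H_R(B) = n, where n is the maximum length of a chain of R-classes of S that intersect B. -/

import Mathlib

/-!
Common definitions: Green's preorder/relation computed inside a subsemigroup,
chains of R-classes, R-height, bi-ideals, one- and two-sided ideals,
the kernel, and completely simple (sub)semigroups.
-/

variable {S : Type*}

/-- Green's preorder `≤_B` computed with multipliers from `B`:
`a ≤_B b` iff `a ∈ bB¹`, i.e. `a = b` or `a = b*s` for some `s ∈ B`. -/
def RLe [Semigroup S] (B : Set S) (a b : S) : Prop :=
  a = b ∨ ∃ s ∈ B, a = b * s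

/-- The strict version `<_B` of Green's preorder. -/
def RLt [Semigroup S] (B : Set S) (a b : S) : Prop :=
  RLe B a b ∧ ¬ RLe B b a

/-- Green's relation `R` computed with multipliers from `B`. -/
def REquiv [Semigroup S] (B : Set S) (a b : S) : Prop :=
  RLe B a b ∧ RLe B b a

/-- There is a chain of `n` (distinct, linearly ordered) `R`-classes of the
subsemigroup `B`, with all representatives lying in `C`. -/
def HasRChain [Semigroup S] (B C : Set S) (n : ℕ) : Prop :=
  ∃ f : Fin n → S, (∀ i, f i ∈ C) ∧ ∀ i j : Fin n, i < j → RLt B (f i) (f j)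

/-- There is a chain of `n` `R`-classes of `S`, each of which is contained in `C`. -/
def HasRChainInside [Semigroup S] (C : Set S) (n : ℕ) : Prop :=
  ∃ f : Fin n → S, (∀ i, ∀ x : S, REquiv Set.univ x (f i) → x ∈ C) ∧
    ∀ i j : Fin n, i < j → RLt (Set.univ : Set S) (f i) (f j)

/-- The `R`-height of the subsemigroup `B`: the supremum of the lengths
(cardinalities) of chains of `R_B`-classes. -/
noncomputable def RHeight [Semigroup S] (B : Set S) : ℕ∞ :=
  sSup ((fun n : ℕ => (n : ℕ∞)) '' {n : ℕ | HasRChain B B n})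

/-- A bi-ideal of `S`: a nonempty subset `B` with `BS¹B ⊆ B`. -/
def IsBiIdeal [Semigroup S] (B : Set S) : Prop :=
  B.Nonempty ∧ ∀ b ∈ B, ∀ c ∈ B, b * c ∈ B ∧ ∀ s : S, b * s * c ∈ B

/-- A right ideal of `S`: a nonempty subset `A` with `AS ⊆ A`. -/
def IsRightIdeal [Semigroup S] (A : Set S) : Prop :=
  A.Nonempty ∧ ∀ a ∈ A, ∀ s : S, a * s ∈ A

/-- A left ideal of `S`: a nonempty subset `A` with `SA ⊆ A`. -/
def IsLeftIdeal [Semigroup S] (A : Set S) : Prop :=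
  A.Nonempty ∧ ∀ a ∈ A, ∀ s : S, s * a ∈ A

/-- A two-sided ideal of `S`. -/
def IsTwoSidedIdealSet [Semigroup S] (A : Set S) : Prop :=
  IsRightIdeal A ∧ IsLeftIdeal A

/-- `K` is the kernel (minimum two-sided ideal) of `S`. -/
def IsKernel [Semigroup S] (K : Set S) : Prop :=
  IsTwoSidedIdealSet K ∧ ∀ A : Set S, IsTwoSidedIdealSet A → K ⊆ A

/-- A right ideal of the subsemigroup `K` of `S`. -/
def IsRightIdealIn [Semigroup S] (K A : Set S) : Prop :=
  A.Nonempty ∧ A ⊆ K ∧ ∀ a ∈ A, ∀ k ∈ K, a * k ∈ A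

/-- A left ideal of the subsemigroup `K` of `S`. -/
def IsLeftIdealIn [Semigroup S] (K A : Set S) : Prop :=
  A.Nonempty ∧ A ⊆ K ∧ ∀ a ∈ A, ∀ k ∈ K, k * a ∈ A

/-- A two-sided ideal of the subsemigroup `K` of `S`. -/
def IsIdealIn [Semigroup S] (K A : Set S) : Prop :=
  IsRightIdealIn K A ∧ IsLeftIdealIn K A

/-- The subsemigroup `K` of `S` is completely simple: it is simple (has no
proper two-sided ideals) and possesses both a minimal right ideal and a
minimal left ideal. -/
def IsCompletelySimple [Semigroup S] (K : Set S) : Prop :=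
  K.Nonempty ∧ (∀ a ∈ K, ∀ b ∈ K, a * b ∈ K) ∧
  (∀ A : Set S, IsIdealIn K A → A = K) ∧
  (∃ A : Set S, IsRightIdealIn K A ∧ ∀ A' : Set S, IsRightIdealIn K A' → A' ⊆ A → A' = A) ∧
  (∃ A : Set S, IsLeftIdealIn K A ∧ ∀ A' : Set S, IsLeftIdealIn K A' → A' ⊆ A → A' = A)

/-- If `S` has finite `R`-height and `B` is a bi-ideal of `S` in which
every element has a local right identity in `B`, then `H_R(B) = n`, where `n` is the
maximum length of a chain of `R_S`-classes that intersect `B`. -/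
theorem biideal_local_right_identities_rheight_eq {S : Type*} [Semigroup S]
    (hfin : RHeight (Set.univ : Set S) ≠ ⊤)
    {B : Set S} (hB : IsBiIdeal B) (hlri : ∀ b ∈ B, ∃ u ∈ B, b = b * u)
    (n : ℕ)
    (hchain : HasRChain (Set.univ : Set S) B n)
    (hmax : ∀ m : ℕ, HasRChain (Set.univ : Set S) B m → m ≤ n) :
    RHeight B = (n : ℕ∞) := by
  -- For a,b ∈ B, Green's preorders in B and in S agree.
  have key : ∀ a ∈ B, ∀ b ∈ B, RLe (Set.univ : Set S) a b → RLe B a b := by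
    intro a ha b hb h
    rcases h with h | ⟨s, -, rfl⟩
    · exact Or.inl h
    · obtain ⟨v, hv, hbv⟩ := hlri b hb
      obtain ⟨u, hu, hau⟩ := hlri (b * s) ha
      refine Or.inr ⟨v * s * u, (hB.2 v hv u hu).2 s, ?_⟩
      calc b * s = b * s * u := hau
        _ = (b * v) * s * u := by rw [← hbv]
        _ = b * (v * s * u) := by simp [mul_assoc]
  have keyrev : ∀ a b : S, RLe B a b → RLe (Set.univ : Set S) a b := by
    intro a b h
    rcases h with h | ⟨s, -, rfl⟩
    · exact Or.inl h
    · exact Or.inr ⟨s, trivial, rfl⟩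
  have hiff : ∀ m : ℕ, HasRChain B B m ↔ HasRChain (Set.univ : Set S) B m := by
    intro m
    constructor
    · rintro ⟨f, hf, hlt⟩
      refine ⟨f, hf, fun i j hij => ?_⟩
      obtain ⟨h1, h2⟩ := hlt i j hij
      exact ⟨keyrev _ _ h1, fun hc => h2 (key _ (hf j) _ (hf i) hc)⟩
    · rintro ⟨f, hf, hlt⟩
      refine ⟨f, hf, fun i j hij => ?_⟩
      obtain ⟨h1, h2⟩ := hlt i j hij
      exact ⟨key _ (hf i) _ (hf j) h1, fun hc => h2 (keyrev _ _ hc)⟩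
  unfold RHeight
  apply le_antisymm
  · apply sSup_le
    rintro x ⟨m, hm, rfl⟩
    simpa using (Nat.cast_le (α := ℕ∞)).mpr (hmax m ((hiff m).mp hm))
  · exact le_sSup ⟨n, (hiff n).mpr hchain, rfl⟩
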